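/- Let m : ℝ → ℝ be even and on ξ₁+ξ₂+ξ₃+ξ₄ = 0 with all ξᵢ ≠ 0, the quantity [2m²(ξ₁)ξ₁ / (3ξ₁ξ₂)]_{sym} (symmetrization over S₄) equals (1/54)[m²(ξ₁)+m²(ξ₂)+m²(ξ₃)+m²(ξ₄)]·α₄/(ξ₁ξ₂ξ₃ξ₄) − (1/18)[m²(ξ₁)/ξ₁ + m²(ξ₂)/ξ₂ + m²(ξ₃)/ξ₃ + m²(ξ₄)/ξ₄], where α₄ = ξ₁³+ξ₂³+ξ₃³+ξ₄³. -/

import Mathlib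

open Finset

/-- Symmetrization of a 4-multiplier: the average over all 24 permutations. -/
noncomputable def sym4 (f : (Fin 4 → ℝ) → ℝ) (ξ : Fin 4 → ℝ) : ℝ :=
  (1 / 24) * ∑ σ : Equiv.Perm (Fin 4), f (ξ ∘ σ)

lemma perm3_sum (h : Fin 3 → ℝ) :
    ∑ τ : Equiv.Perm (Fin 3), h (τ 0) = 2 * (h 0 + h 1 + h 2) := by
  rw [← (Equiv.Perm.decomposeFin (n := 2)).symm.sum_comp, Fintype.sum_prod_type]
  simp only [Equiv.Perm.decomposeFin_symm_apply_zero, Finset.sum_const,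
    Finset.card_univ, Fintype.card_perm]
  simp [Fin.sum_univ_three]
  ring

lemma perm4_sum (g : Fin 4 → Fin 4 → ℝ) :
    ∑ σ : Equiv.Perm (Fin 4), g (σ 0) (σ 1) =
      2 * (g 0 1 + g 0 2 + g 0 3 + g 1 0 + g 1 2 + g 1 3 +
           g 2 0 + g 2 1 + g 2 3 + g 3 0 + g 3 1 + g 3 2) := by
  rw [← (Equiv.Perm.decomposeFin (n := 3)).symm.sum_comp, Fintype.sum_prod_type]
  simp only [show (1 : Fin 4) = Fin.succ 0 from rfl,
    Equiv.Perm.decomposeFin_symm_apply_zero,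
    Equiv.Perm.decomposeFin_symm_apply_succ]
  have key : ∀ x : Fin 4,
      ∑ τ : Equiv.Perm (Fin 3), g x ((Equiv.swap 0 x) ((τ 0).succ)) =
      2 * (g x ((Equiv.swap 0 x) ((0 : Fin 3).succ)) +
           g x ((Equiv.swap 0 x) ((1 : Fin 3).succ)) +
           g x ((Equiv.swap 0 x) ((2 : Fin 3).succ))) :=
    fun x => perm3_sum (fun j => g x ((Equiv.swap 0 x) j.succ))
  simp only [key, Fin.sum_univ_four]
  norm_num [Equiv.swap_apply_def, Fin.ext_iff, Fin.succ]
  norm_num [show ((3:Fin 4):ℕ) = 3 from rfl, show (⟨2,by norm_num⟩:Fin 4) = 2 from rfl,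
    show (⟨3,by norm_num⟩:Fin 4) = 3 from rfl]
  ring

lemma inv_sum_eq (a b c d : ℝ) (ha : a ≠ 0) (hb : b ≠ 0) (hc : c ≠ 0) (hd : d ≠ 0)
    (h : a + b + c + d = 0) :
    1/a + 1/b + 1/c + 1/d = (a^3 + b^3 + c^3 + d^3) / (3*(a*b*c*d)) := by
  field_simp
  linear_combination (-((a+b+c+d)^2 - 3*(a*b+a*c+a*d+b*c+b*d+c*d))) * h

lemma cancel_term (X y x : ℝ) (hx : x ≠ 0) (hy : y ≠ 0) :
    2*X*x/(3*x*y) = (2/3)*X*(1/y) := by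
  field_simp

theorem M4_first_term_identity (m : ℝ → ℝ) (heven : ∀ ξ, m (-ξ) = m ξ)
    (ξ : Fin 4 → ℝ) (hsum : ξ 0 + ξ 1 + ξ 2 + ξ 3 = 0)
    (hne : ∀ i, ξ i ≠ 0) :
    sym4 (fun x => (2 * (m (x 0)) ^ 2 * x 0) / (3 * x 0 * x 1)) ξ =
      (1 / 54) *
          ((m (ξ 0)) ^ 2 + (m (ξ 1)) ^ 2 + (m (ξ 2)) ^ 2 + (m (ξ 3)) ^ 2) *
          ((ξ 0 ^ 3 + ξ 1 ^ 3 + ξ 2 ^ 3 + ξ 3 ^ 3) /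
            (ξ 0 * ξ 1 * ξ 2 * ξ 3)) -
        (1 / 18) *
          ((m (ξ 0)) ^ 2 / ξ 0 + (m (ξ 1)) ^ 2 / ξ 1 + (m (ξ 2)) ^ 2 / ξ 2 +
            (m (ξ 3)) ^ 2 / ξ 3) := by
  have h0 := hne 0; have h1 := hne 1; have h2 := hne 2; have h3 := hne 3
  have key : (∑ σ : Equiv.Perm (Fin 4),
        (2 * (m (ξ (σ 0))) ^ 2 * ξ (σ 0)) / (3 * ξ (σ 0) * ξ (σ 1)))
      = 2 * ((2 * (m (ξ 0))^2 * ξ 0)/(3 * ξ 0 * ξ 1) + (2 * (m (ξ 0))^2 * ξ 0)/(3 * ξ 0 * ξ 2)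
          + (2 * (m (ξ 0))^2 * ξ 0)/(3 * ξ 0 * ξ 3) + (2 * (m (ξ 1))^2 * ξ 1)/(3 * ξ 1 * ξ 0)
          + (2 * (m (ξ 1))^2 * ξ 1)/(3 * ξ 1 * ξ 2) + (2 * (m (ξ 1))^2 * ξ 1)/(3 * ξ 1 * ξ 3)
          + (2 * (m (ξ 2))^2 * ξ 2)/(3 * ξ 2 * ξ 0) + (2 * (m (ξ 2))^2 * ξ 2)/(3 * ξ 2 * ξ 1)
          + (2 * (m (ξ 2))^2 * ξ 2)/(3 * ξ 2 * ξ 3) + (2 * (m (ξ 3))^2 * ξ 3)/(3 * ξ 3 * ξ 0)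
          + (2 * (m (ξ 3))^2 * ξ 3)/(3 * ξ 3 * ξ 1) + (2 * (m (ξ 3))^2 * ξ 3)/(3 * ξ 3 * ξ 2)) :=
    perm4_sum (fun i j => (2 * (m (ξ i)) ^ 2 * ξ i) / (3 * ξ i * ξ j))
  have lhs : sym4 (fun x => (2 * (m (x 0)) ^ 2 * x 0) / (3 * x 0 * x 1)) ξ
      = (1/24) * ∑ σ : Equiv.Perm (Fin 4),
          (2 * (m (ξ (σ 0))) ^ 2 * ξ (σ 0)) / (3 * ξ (σ 0) * ξ (σ 1)) := rfl
  rw [lhs, key,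
    cancel_term ((m (ξ 0))^2) (ξ 1) (ξ 0) h0 h1, cancel_term ((m (ξ 0))^2) (ξ 2) (ξ 0) h0 h2,
    cancel_term ((m (ξ 0))^2) (ξ 3) (ξ 0) h0 h3, cancel_term ((m (ξ 1))^2) (ξ 0) (ξ 1) h1 h0,
    cancel_term ((m (ξ 1))^2) (ξ 2) (ξ 1) h1 h2, cancel_term ((m (ξ 1))^2) (ξ 3) (ξ 1) h1 h3,
    cancel_term ((m (ξ 2))^2) (ξ 0) (ξ 2) h2 h0, cancel_term ((m (ξ 2))^2) (ξ 1) (ξ 2) h2 h1,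
    cancel_term ((m (ξ 2))^2) (ξ 3) (ξ 2) h2 h3, cancel_term ((m (ξ 3))^2) (ξ 0) (ξ 3) h3 h0,
    cancel_term ((m (ξ 3))^2) (ξ 1) (ξ 3) h3 h1, cancel_term ((m (ξ 3))^2) (ξ 2) (ξ 3) h3 h2]
  linear_combination ((1/18) * ((m (ξ 0))^2 + (m (ξ 1))^2 + (m (ξ 2))^2 + (m (ξ 3))^2)) *
    inv_sum_eq (ξ 0) (ξ 1) (ξ 2) (ξ 3) h0 h1 h2 h3 hsum
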